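/- arXiv:0704.0524 — 5 statements merged into one kernel-verified Lean document; each statement's English description precedes it below -/
import Mathlib

section
/- Let b₀, b₁ > 0. For every integer j ≥ 1 with π² j² > max{b₀, b₁}, there exists λ ∈ (−π²(j+1)², −π² j²) such that sin(√(−λ)) ≠ 0, λ + b₀ ≠ 0, λ + b₁ ≠ 0, and D(λ) = 0, where D(λ) = 1 + √(−λ)·(cos(√(−λ))/sin(√(−λ)))·(1/(λ+b₀) + 1/(λ+b₁)) + λ/((λ+b₀)(λ+b₁)). In particular, the equation D(λ) = 0 has infinitely many solutions λ < 0. -/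
/-- The determinant function `D(λ)` of the characteristic matrix `F(λ)`, for `λ < 0`. -/
noncomputable def detF (b₀ b₁ l : ℝ) : ℝ :=
  1 + Real.sqrt (-l) * (Real.cos (Real.sqrt (-l)) / Real.sin (Real.sqrt (-l))) *
      (1 / (l + b₀) + 1 / (l + b₁)) +
    l / ((l + b₀) * (l + b₁))

/-- Auxiliary function: `sin x · detF b₀ b₁ (-x²)`, cleared of denominators in the
cotangent. -/
noncomputable def auxH (b₀ b₁ x : ℝ) : ℝ :=
  Real.sin x * (1 + (-x ^ 2) / ((-x ^ 2 + b₀) * (-x ^ 2 + b₁))) +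
    x * Real.cos x * (1 / (-x ^ 2 + b₀) + 1 / (-x ^ 2 + b₁))

lemma cos_nat_pi (n : ℕ) : Real.cos ((n : ℝ) * Real.pi) = (-1) ^ n := by
  have := Real.cos_nat_mul_pi_sub 0 n
  simpa using this

lemma key_lemma (b₀ b₁ : ℝ) (hb₀ : 0 < b₀) (hb₁ : 0 < b₁) (j : ℕ) (hj : 1 ≤ j)
    (hmax : max b₀ b₁ < Real.pi ^ 2 * (j : ℝ) ^ 2) :
    ∃ l : ℝ, l ∈ Set.Ioo (-(Real.pi ^ 2 * ((j : ℝ) + 1) ^ 2)) (-(Real.pi ^ 2 * (j : ℝ) ^ 2)) ∧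
      Real.sin (Real.sqrt (-l)) ≠ 0 ∧ l + b₀ ≠ 0 ∧ l + b₁ ≠ 0 ∧ detF b₀ b₁ l = 0 := by
  have hπ : 0 < Real.pi := Real.pi_pos
  set a : ℝ := Real.pi * j with ha_def
  set b : ℝ := Real.pi * ((j : ℝ) + 1) with hb_def
  have hj1 : (1 : ℝ) ≤ (j : ℝ) := by exact_mod_cast hj
  have ha_pos : 0 < a := by positivity
  have hab : a < b := by
    have : (j : ℝ) < (j : ℝ) + 1 := by linarith
    exact (mul_lt_mul_iff_right₀ hπ).mpr this
  have hb0' : b₀ < Real.pi ^ 2 * (j : ℝ) ^ 2 := lt_of_le_of_lt (le_max_left _ _) hmax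
  have hb1' : b₁ < Real.pi ^ 2 * (j : ℝ) ^ 2 := lt_of_le_of_lt (le_max_right _ _) hmax
  have hden : ∀ x ∈ Set.Icc a b, -x ^ 2 + b₀ < 0 ∧ -x ^ 2 + b₁ < 0 := by
    intro x hx
    have hxa : a ≤ x := hx.1
    have hx2 : a ^ 2 ≤ x ^ 2 := by nlinarith
    have ha2 : a ^ 2 = Real.pi ^ 2 * (j : ℝ) ^ 2 := by rw [ha_def]; ring
    constructor <;> nlinarith
  -- continuity of auxH on [a,b]
  have hcont : ContinuousOn (auxH b₀ b₁) (Set.Icc a b) := by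
    apply ContinuousOn.add
    · apply ContinuousOn.mul (Real.continuous_sin.continuousOn)
      apply ContinuousOn.add continuousOn_const
      apply ContinuousOn.div (by fun_prop) (by fun_prop)
      intro x hx
      have := hden x hx
      exact mul_ne_zero this.1.ne this.2.ne
    · apply ContinuousOn.mul (by fun_prop)
      apply ContinuousOn.add
      · exact ContinuousOn.div continuousOn_const (by fun_prop)
          (fun x hx => (hden x hx).1.ne)
      · exact ContinuousOn.div continuousOn_const (by fun_prop)
          (fun x hx => (hden x hx).2.ne)
  -- values at endpoints
  have hsina : Real.sin a = 0 := by
    rw [ha_def, mul_comm]; exact Real.sin_nat_mul_pi j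
  have hsinb : Real.sin b = 0 := by
    rw [hb_def, mul_comm]
    have : ((j : ℝ) + 1) = ((j + 1 : ℕ) : ℝ) := by push_cast; ring
    rw [this]; exact Real.sin_nat_mul_pi (j + 1)
  have hcosa : Real.cos a = (-1) ^ j := by rw [ha_def, mul_comm]; exact cos_nat_pi j
  have hcosb : Real.cos b = -(-1) ^ j := by
    rw [hb_def, mul_comm]
    have : ((j : ℝ) + 1) = ((j + 1 : ℕ) : ℝ) := by push_cast; ring
    rw [this, cos_nat_pi (j + 1)]
    rw [pow_succ]; ring
  have hSa : 1 / (-a ^ 2 + b₀) + 1 / (-a ^ 2 + b₁) < 0 := by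
    have h := hden a ⟨le_refl a, le_of_lt hab⟩
    have h0 : 1 / (-a ^ 2 + b₀) < 0 := by
      exact div_neg_of_pos_of_neg one_pos h.1
    have h1 : 1 / (-a ^ 2 + b₁) < 0 := by
      exact div_neg_of_pos_of_neg one_pos h.2
    linarith
  have hSb : 1 / (-b ^ 2 + b₀) + 1 / (-b ^ 2 + b₁) < 0 := by
    have h := hden b ⟨le_of_lt hab, le_refl b⟩
    have h0 : 1 / (-b ^ 2 + b₀) < 0 := div_neg_of_pos_of_neg one_pos h.1
    have h1 : 1 / (-b ^ 2 + b₁) < 0 := div_neg_of_pos_of_neg one_pos h.2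
    linarith
  have hHa : auxH b₀ b₁ a = (-1) ^ j * (a * (1 / (-a ^ 2 + b₀) + 1 / (-a ^ 2 + b₁))) := by
    rw [auxH, hsina, hcosa]; ring
  have hHb : auxH b₀ b₁ b = -(-1) ^ j * (b * (1 / (-b ^ 2 + b₀) + 1 / (-b ^ 2 + b₁))) := by
    rw [auxH, hsinb, hcosb]; ring
  have hprodA : a * (1 / (-a ^ 2 + b₀) + 1 / (-a ^ 2 + b₁)) < 0 :=
    mul_neg_of_pos_of_neg ha_pos hSa
  have hprodB : b * (1 / (-b ^ 2 + b₀) + 1 / (-b ^ 2 + b₁)) < 0 :=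
    mul_neg_of_pos_of_neg (lt_trans ha_pos hab) hSb
  -- get the zero of auxH in (a, b)
  have hzero : ∃ x ∈ Set.Ioo a b, auxH b₀ b₁ x = 0 := by
    rcases Nat.even_or_odd j with he | ho
    · -- j even : H a < 0 < H b
      have hsign : ((-1 : ℝ)) ^ j = 1 := he.neg_one_pow
      have h1 : auxH b₀ b₁ a < 0 := by rw [hHa, hsign]; linarith [hprodA]
      have h2 : 0 < auxH b₀ b₁ b := by rw [hHb, hsign]; linarith [hprodB]
      have := intermediate_value_Ioo (le_of_lt hab) hcont
      have h0 : (0 : ℝ) ∈ Set.Ioo (auxH b₀ b₁ a) (auxH b₀ b₁ b) := ⟨h1, h2⟩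
      obtain ⟨x, hx, hx0⟩ := this h0
      exact ⟨x, hx, hx0⟩
    · have hsign : ((-1 : ℝ)) ^ j = -1 := ho.neg_one_pow
      have h1 : 0 < auxH b₀ b₁ a := by rw [hHa, hsign]; linarith [hprodA]
      have h2 : auxH b₀ b₁ b < 0 := by rw [hHb, hsign]; linarith [hprodB]
      have := intermediate_value_Ioo' (le_of_lt hab) hcont
      have h0 : (0 : ℝ) ∈ Set.Ioo (auxH b₀ b₁ b) (auxH b₀ b₁ a) := ⟨h2, h1⟩
      obtain ⟨x, hx, hx0⟩ := this h0
      exact ⟨x, hx, hx0⟩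
  obtain ⟨x, hx, hHx⟩ := hzero
  have hx_pos : 0 < x := lt_trans ha_pos hx.1
  refine ⟨-x ^ 2, ?_, ?_⟩
  · constructor
    · have h1 : x ^ 2 < b ^ 2 := pow_lt_pow_left₀ hx.2 hx_pos.le (by norm_num)
      have hb2 : b ^ 2 = Real.pi ^ 2 * ((j : ℝ) + 1) ^ 2 := by rw [hb_def]; ring
      rw [← hb2]; linarith
    · have h1 : a ^ 2 < x ^ 2 := pow_lt_pow_left₀ hx.1 ha_pos.le (by norm_num)
      have ha2 : a ^ 2 = Real.pi ^ 2 * (j : ℝ) ^ 2 := by rw [ha_def]; ring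
      rw [← ha2]; linarith
  · have hsqrt : Real.sqrt (-(-x ^ 2)) = x := by
      rw [neg_neg, Real.sqrt_sq hx_pos.le]
    have hsinx : Real.sin x ≠ 0 := by
      intro hs
      rw [Real.sin_eq_zero_iff] at hs
      obtain ⟨n, hn⟩ := hs
      have h1 : (j : ℝ) < (n : ℝ) := by
        have h := hx.1
        rw [← hn, ha_def] at h
        have h' : (j : ℝ) * Real.pi < (n : ℝ) * Real.pi := by linarith [mul_comm Real.pi (j : ℝ) ▸ h]
        exact (mul_lt_mul_iff_left₀ hπ).mp h'
      have h2 : (n : ℝ) < (j : ℝ) + 1 := by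
        have h := hx.2
        rw [← hn, hb_def] at h
        have h' : (n : ℝ) * Real.pi < ((j : ℝ) + 1) * Real.pi := by
          linarith [mul_comm Real.pi ((j : ℝ) + 1) ▸ h]
        exact (mul_lt_mul_iff_left₀ hπ).mp h'
      have h1' : (j : ℤ) < n := by exact_mod_cast h1
      have h2' : n < (j : ℤ) + 1 := by exact_mod_cast h2
      omega
    have hd := hden x ⟨hx.1.le, hx.2.le⟩
    have hd0 : -x ^ 2 + b₀ ≠ 0 := hd.1.ne
    have hd1 : -x ^ 2 + b₁ ≠ 0 := hd.2.ne
    refine ⟨by rwa [hsqrt], fun h => hd0 (by linarith), fun h => hd1 (by linarith), ?_⟩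
    have key : Real.sin x * detF b₀ b₁ (-x ^ 2) = auxH b₀ b₁ x := by
      rw [detF, auxH, hsqrt]
      field_simp
      ring
    have hz : Real.sin x * detF b₀ b₁ (-x ^ 2) = 0 := by rw [key, hHx]
    rcases mul_eq_zero.mp hz with h | h
    · exact absurd h hsinx
    · exact h

/-- For `b₀, b₁ > 0`, every interval `(−π²(j+1)², −π²j²)` with `π²j² > max{b₀,b₁}`
contains a zero of `D`; in particular `D(λ) = 0` has infinitely many solutions
`λ < 0`. -/
theorem detF_has_infinitely_many_zeros (b₀ b₁ : ℝ) (hb₀ : 0 < b₀) (hb₁ : 0 < b₁) :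
    (∀ j : ℕ, 1 ≤ j → max b₀ b₁ < Real.pi ^ 2 * (j : ℝ) ^ 2 →
      ∃ l : ℝ, l ∈ Set.Ioo (-(Real.pi ^ 2 * ((j : ℝ) + 1) ^ 2)) (-(Real.pi ^ 2 * (j : ℝ) ^ 2)) ∧
        Real.sin (Real.sqrt (-l)) ≠ 0 ∧ l + b₀ ≠ 0 ∧ l + b₁ ≠ 0 ∧ detF b₀ b₁ l = 0) ∧
    {l : ℝ | l < 0 ∧ Real.sin (Real.sqrt (-l)) ≠ 0 ∧ l + b₀ ≠ 0 ∧ l + b₁ ≠ 0 ∧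
      detF b₀ b₁ l = 0}.Infinite := by
  have hπ : 0 < Real.pi := Real.pi_pos
  refine ⟨fun j hj hmax => key_lemma b₀ b₁ hb₀ hb₁ j hj hmax, ?_⟩
  set N : ℕ := ⌈max b₀ b₁⌉₊ + 1 with hN_def
  have hN1 : 1 ≤ N := by omega
  have hπ1 : (1 : ℝ) ≤ Real.pi ^ 2 := by nlinarith [Real.pi_gt_three]
  have hgood : ∀ n : ℕ, max b₀ b₁ < Real.pi ^ 2 * ((n + N : ℕ) : ℝ) ^ 2 := by
    intro n
    have h1 : max b₀ b₁ < (N : ℝ) := by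
      have := Nat.le_ceil (max b₀ b₁)
      have : max b₀ b₁ ≤ (⌈max b₀ b₁⌉₊ : ℝ) := this
      have hN : ((⌈max b₀ b₁⌉₊ : ℕ) : ℝ) + 1 = (N : ℝ) := by push_cast [hN_def]; ring
      linarith
    have h2 : (N : ℝ) ≤ ((n + N : ℕ) : ℝ) := by exact_mod_cast Nat.le_add_left N n
    have h3 : (1 : ℝ) ≤ (N : ℝ) := by exact_mod_cast hN1
    nlinarith
  have hex : ∀ n : ℕ, ∃ l : ℝ,
      l ∈ Set.Ioo (-(Real.pi ^ 2 * (((n + N : ℕ) : ℝ) + 1) ^ 2))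
        (-(Real.pi ^ 2 * ((n + N : ℕ) : ℝ) ^ 2)) ∧
      Real.sin (Real.sqrt (-l)) ≠ 0 ∧ l + b₀ ≠ 0 ∧ l + b₁ ≠ 0 ∧ detF b₀ b₁ l = 0 :=
    fun n => key_lemma b₀ b₁ hb₀ hb₁ (n + N) (by omega) (hgood n)
  choose f hf1 hf2 hf3 hf4 hf5 using hex
  have hflt : ∀ n : ℕ, f n < -(Real.pi ^ 2 * ((n + N : ℕ) : ℝ) ^ 2) := fun n => (hf1 n).2
  have hfgt : ∀ n : ℕ, -(Real.pi ^ 2 * (((n + N : ℕ) : ℝ) + 1) ^ 2) < f n := fun n => (hf1 n).1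
  have hanti : StrictAnti f := by
    apply strictAnti_nat_of_succ_lt
    intro n
    have h1 := hflt (n + 1)
    have h2 := hfgt n
    have : (((n + N : ℕ) : ℝ) + 1) = (((n + 1 + N : ℕ) : ℝ)) := by push_cast; ring
    rw [this] at h2
    have h3 : Real.pi ^ 2 * (((n + 1 + N : ℕ) : ℝ)) ^ 2 ≤
        Real.pi ^ 2 * (((n + 1 + N : ℕ) : ℝ)) ^ 2 := le_refl _
    linarith
  apply Set.infinite_of_injective_forall_mem (f := f) hanti.injective
  intro n
  refine ⟨?_, hf2 n, hf3 n, hf4 n, hf5 n⟩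
  have := hflt n
  have hpos : 0 < Real.pi ^ 2 * ((n + N : ℕ) : ℝ) ^ 2 := by
    have : (1 : ℝ) ≤ ((n + N : ℕ) : ℝ) := by exact_mod_cast Nat.one_le_iff_ne_zero.mpr (by omega)
    nlinarith
  linarith
end

section
/- Let b₀, b₁ > 0 and let λ < 0 satisfy sin(√(−λ)) ≠ 0, λ + b₀ ≠ 0, λ + b₁ ≠ 0, and D(λ) = 0. Set μ = √(−λ) and define e : [0,1] → ℝ by e(x) = (μ/(b₀+λ))·cos(μx) + sin(μx). Then e is not identically zero, e''(x) = λ e(x) for all x ∈ [0,1], e'(0) = (λ + b₀) e(0), and −e'(1) = (λ + b₁) e(1). -/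
/-- If `λ < 0` is a zero of `D`, then `e(x) = (μ/(b₀+λ)) cos(μx) + sin(μx)`
(with `μ = √(−λ)`) is a nonzero eigenfunction: `e'' = λe` on `[0,1]` with the
boundary relations `e'(0) = (λ+b₀) e(0)` and `−e'(1) = (λ+b₁) e(1)`. -/
theorem eigenfunction_of_detF_zero (b₀ b₁ : ℝ) (hb₀ : 0 < b₀) (hb₁ : 0 < b₁)
    (l : ℝ) (hl : l < 0) (hsin : Real.sin (Real.sqrt (-l)) ≠ 0)
    (h0 : l + b₀ ≠ 0) (h1 : l + b₁ ≠ 0) (hD : detF b₀ b₁ l = 0)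
    (μ : ℝ) (hμ : μ = Real.sqrt (-l))
    (e : ℝ → ℝ) (he : e = fun x => μ / (b₀ + l) * Real.cos (μ * x) + Real.sin (μ * x)) :
    (∃ x ∈ Set.Icc (0:ℝ) 1, e x ≠ 0) ∧
    (∀ x ∈ Set.Icc (0:ℝ) 1, deriv (deriv e) x = l * e x) ∧
    deriv e 0 = (l + b₀) * e 0 ∧
    -(deriv e 1) = (l + b₁) * e 1 := by
  have hμpos : 0 < μ := by
    rw [hμ]; exact Real.sqrt_pos.mpr (by linarith)
  have hμsq : μ ^ 2 = -l := by
    rw [hμ]; exact Real.sq_sqrt (by linarith)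
  set c : ℝ := μ / (b₀ + l) with hc
  have hlin : ∀ x : ℝ, HasDerivAt (fun y : ℝ => μ * y) μ x := by
    intro x; simpa using (hasDerivAt_id x).const_mul μ
  have hder : deriv e = fun x => -(c * μ) * Real.sin (μ * x) + μ * Real.cos (μ * x) := by
    funext x
    have hcos : HasDerivAt (fun y => Real.cos (μ * y)) (-Real.sin (μ * x) * μ) x :=
      (Real.hasDerivAt_cos (μ * x)).comp x (hlin x)
    have hsin' : HasDerivAt (fun y => Real.sin (μ * y)) (Real.cos (μ * x) * μ) x :=
      (Real.hasDerivAt_sin (μ * x)).comp x (hlin x)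
    have : HasDerivAt e (c * (-Real.sin (μ * x) * μ) + Real.cos (μ * x) * μ) x := by
      rw [he]; exact (hcos.const_mul c).add hsin'
    rw [this.deriv]; ring
  have hder2 : ∀ x : ℝ, deriv (deriv e) x = l * e x := by
    intro x
    have hcos : HasDerivAt (fun y => Real.cos (μ * y)) (-Real.sin (μ * x) * μ) x :=
      (Real.hasDerivAt_cos (μ * x)).comp x (hlin x)
    have hsin' : HasDerivAt (fun y => Real.sin (μ * y)) (Real.cos (μ * x) * μ) x :=
      (Real.hasDerivAt_sin (μ * x)).comp x (hlin x)
    have hD2 : HasDerivAt (deriv e)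
        (-(c * μ) * (Real.cos (μ * x) * μ) + μ * (-Real.sin (μ * x) * μ)) x := by
      rw [hder]; exact (hsin'.const_mul (-(c * μ))).add (hcos.const_mul μ)
    rw [hD2.deriv, he]
    linear_combination (-(c * Real.cos (μ * x)) - Real.sin (μ * x)) * hμsq
  have hb₀l : b₀ + l ≠ 0 := by rw [add_comm]; exact h0
  refine ⟨⟨0, by norm_num, ?_⟩, fun x _ => hder2 x, ?_, ?_⟩
  · rw [he]; simp
    exact div_ne_zero (ne_of_gt hμpos) hb₀l
  · rw [hder, he]; simp [hc]
    field_simp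
    ring
  · rw [hder, he]
    unfold detF at hD
    rw [← hμ] at hD
    have hsinμ : Real.sin μ ≠ 0 := hμ ▸ hsin
    simp only [mul_one]
    field_simp [hc] at hD ⊢
    have hP : (l + b₀) * (l + b₁) ≠ 0 := mul_ne_zero h0 h1
    have key : (Real.sin μ * ((l + b₀) * (l + b₁)) + μ * Real.cos μ * (l + b₁ + (l + b₀)) +
        l * Real.sin μ) * ((l + b₀) * (l + b₁)) = 0 := by linear_combination ((l + b₀) * (l + b₁)) * hD
    have hD'' := (mul_eq_zero.mp key).resolve_right hP
    rw [hc]; field_simp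
    linear_combination Real.sin μ * hμsq - hD''
end

section
/- Let b₀, b₁ > 0 and let λ < 0 satisfy sin(√(−λ)) ≠ 0, λ + b₀ ≠ 0, λ + b₁ ≠ 0. Then there exists a twice continuously differentiable function u : [0,1] → ℝ, not identically zero, satisfying u''(x) = λ u(x) on [0,1], u'(0) = (λ + b₀) u(0), and −u'(1) = (λ + b₁) u(1), if and only if D(λ) = 0, where D(λ) = 1 + √(−λ)·(cos(√(−λ))/sin(√(−λ)))·(1/(λ+b₀) + 1/(λ+b₁)) + λ/((λ+b₀)(λ+b₁)). -/
open Real Set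

private lemma hasDerivAt_cos_mul (ω x : ℝ) :
    HasDerivAt (fun y : ℝ => Real.cos (ω * y)) (-Real.sin (ω * x) * ω) x := by
  simpa [Function.comp_def] using (Real.hasDerivAt_cos (ω * x)).comp x ((hasDerivAt_id x).const_mul ω)

private lemma hasDerivAt_sin_mul (ω x : ℝ) :
    HasDerivAt (fun y : ℝ => Real.sin (ω * y)) (Real.cos (ω * x) * ω) x := by
  simpa [Function.comp_def] using (Real.hasDerivAt_sin (ω * x)).comp x ((hasDerivAt_id x).const_mul ω)

/-- A negative number `λ` (with `sin √(−λ) ≠ 0`, `λ + b₀ ≠ 0`, `λ + b₁ ≠ 0`) is an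
eigenvalue of the matrix operator — i.e. there is a nonzero `C²` solution of
`u'' = λu` on `[0,1]` with `u'(0) = (λ+b₀)u(0)` and `−u'(1) = (λ+b₁)u(1)` —
if and only if `D(λ) = 0`. -/
theorem eigenvalue_iff_detF_zero (b₀ b₁ : ℝ) (hb₀ : 0 < b₀) (hb₁ : 0 < b₁)
    (l : ℝ) (hl : l < 0) (hsin : Real.sin (Real.sqrt (-l)) ≠ 0)
    (h0 : l + b₀ ≠ 0) (h1 : l + b₁ ≠ 0) :
    (∃ u : ℝ → ℝ, ContDiff ℝ 2 u ∧ (∃ x ∈ Set.Icc (0:ℝ) 1, u x ≠ 0) ∧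
      (∀ x ∈ Set.Icc (0:ℝ) 1, deriv (deriv u) x = l * u x) ∧
      deriv u 0 = (l + b₀) * u 0 ∧
      -(deriv u 1) = (l + b₁) * u 1) ↔
    detF b₀ b₁ l = 0 := by
  set ω := Real.sqrt (-l) with hω
  have hω0 : 0 < ω := Real.sqrt_pos.mpr (by linarith)
  have hω2 : ω ^ 2 = -l := Real.sq_sqrt (by linarith)
  constructor
  · rintro ⟨u, hu, ⟨x₀, hx₀, hux₀⟩, hode, hbc0, hbc1⟩
    -- u is C², extract differentiability facts
    have hu' : Differentiable ℝ u ∧ ContDiff ℝ 1 (deriv u) := by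
      have h2 : (2 : WithTop ℕ∞) = 1 + 1 := by norm_num
      rw [h2, contDiff_succ_iff_deriv] at hu
      exact ⟨hu.1, hu.2.2⟩
    obtain ⟨hudiff, hu1⟩ := hu'
    have hu'diff : Differentiable ℝ (deriv u) := hu1.differentiable one_ne_zero
    -- Wronskian-type quantities P, Q
    set P : ℝ → ℝ := fun x => u x * ω * Real.cos (ω * x) - deriv u x * Real.sin (ω * x)
      with hP
    set Q : ℝ → ℝ := fun x => deriv u x * Real.cos (ω * x) + u x * ω * Real.sin (ω * x)
      with hQ
    have hPc : ContinuousOn P (Icc 0 1) := by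
      apply Continuous.continuousOn
      fun_prop
    have hQc : ContinuousOn Q (Icc 0 1) := by
      apply Continuous.continuousOn
      fun_prop
    have hPd : ∀ x ∈ Ico (0:ℝ) 1, HasDerivWithinAt P 0 (Ici x) x := by
      intro x hx
      have hxI : x ∈ Icc (0:ℝ) 1 := ⟨hx.1, le_of_lt hx.2⟩
      have h1d : HasDerivAt u (deriv u x) x := (hudiff x).hasDerivAt
      have h2d : HasDerivAt (deriv u) (deriv (deriv u) x) x := (hu'diff x).hasDerivAt
      have := (((h1d.mul_const ω).mul (hasDerivAt_cos_mul ω x)).sub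
        (h2d.mul (hasDerivAt_sin_mul ω x)))
      have heq : deriv u x * ω * Real.cos (ω * x) + u x * ω * (-Real.sin (ω * x) * ω) -
          (deriv (deriv u) x * Real.sin (ω * x) + deriv u x * (Real.cos (ω * x) * ω)) = 0 := by
        rw [hode x hxI]
        have : u x * ω * (-Real.sin (ω * x) * ω) = -(ω^2) * u x * Real.sin (ω * x) := by ring
        rw [this, hω2]
        ring
      exact ((heq ▸ this).hasDerivWithinAt)
    have hQd : ∀ x ∈ Ico (0:ℝ) 1, HasDerivWithinAt Q 0 (Ici x) x := by
      intro x hx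
      have hxI : x ∈ Icc (0:ℝ) 1 := ⟨hx.1, le_of_lt hx.2⟩
      have h1d : HasDerivAt u (deriv u x) x := (hudiff x).hasDerivAt
      have h2d : HasDerivAt (deriv u) (deriv (deriv u) x) x := (hu'diff x).hasDerivAt
      have := ((h2d.mul (hasDerivAt_cos_mul ω x)).add
        ((h1d.mul_const ω).mul (hasDerivAt_sin_mul ω x)))
      have heq : deriv (deriv u) x * Real.cos (ω * x) + deriv u x * (-Real.sin (ω * x) * ω) +
          (deriv u x * ω * Real.sin (ω * x) + u x * ω * (Real.cos (ω * x) * ω)) = 0 := by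
        rw [hode x hxI]
        have : u x * ω * (Real.cos (ω * x) * ω) = ω^2 * u x * Real.cos (ω * x) := by ring
        rw [this, hω2]
        ring
      exact ((heq ▸ this).hasDerivWithinAt)
    have hPconst := constant_of_has_deriv_right_zero hPc hPd
    have hQconst := constant_of_has_deriv_right_zero hQc hQd
    have hP0 : P 0 = u 0 * ω := by simp [hP]
    have hQ0 : Q 0 = deriv u 0 := by simp [hQ]
    -- recover u and deriv u on [0,1]
    have key : ∀ x ∈ Icc (0:ℝ) 1,
        ω * u x = u 0 * ω * Real.cos (ω * x) + deriv u 0 * Real.sin (ω * x) ∧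
        deriv u x = deriv u 0 * Real.cos (ω * x) - u 0 * ω * Real.sin (ω * x) := by
      intro x hx
      have hPx : P x = u 0 * ω := by rw [hPconst x hx, hP0]
      have hQx : Q x = deriv u 0 := by rw [hQconst x hx, hQ0]
      have hsc : Real.sin (ω * x) ^ 2 + Real.cos (ω * x) ^ 2 = 1 :=
        Real.sin_sq_add_cos_sq (ω * x)
      constructor
      · have : P x * Real.cos (ω * x) + Q x * Real.sin (ω * x) = ω * u x := by
          simp only [hP, hQ]; linear_combination (ω * u x) * hsc
        rw [hPx, hQx] at this; linarith
      · have : Q x * Real.cos (ω * x) - P x * Real.sin (ω * x) = deriv u x := by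
          simp only [hP, hQ]; linear_combination (deriv u x) * hsc
        rw [hPx, hQx] at this; linarith
    -- u 0 ≠ 0
    have hu0 : u 0 ≠ 0 := by
      intro h00
      have hd0 : deriv u 0 = 0 := by rw [hbc0, h00, mul_zero]
      have := (key x₀ hx₀).1
      rw [h00, hd0] at this
      simp at this
      rcases this with h | h
      · exact absurd h (ne_of_gt hω0)
      · exact hux₀ h
    -- boundary condition at 1
    have h1I : (1:ℝ) ∈ Icc (0:ℝ) 1 := ⟨zero_le_one, le_refl 1⟩
    obtain ⟨hu1v, hdu1v⟩ := key 1 h1I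
    rw [mul_one] at hu1v hdu1v
    -- combine
    have hE : -(deriv u 0 * Real.cos ω - u 0 * ω * Real.sin ω) * ω =
        (l + b₁) * (u 0 * ω * Real.cos ω + deriv u 0 * Real.sin ω) := by
      rw [← hdu1v, ← hu1v]
      rw [hbc1]; ring
    rw [hbc0] at hE
    -- divide by u 0 and conclude
    have hEn : -((l + b₀) * Real.cos ω - ω * Real.sin ω) * ω =
        (l + b₁) * (ω * Real.cos ω + (l + b₀) * Real.sin ω) := by
      have h2 : u 0 * ((ω * Real.sin ω - (l + b₀) * Real.cos ω) * ω) =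
          u 0 * ((l + b₁) * (ω * Real.cos ω + (l + b₀) * Real.sin ω)) := by
        linear_combination hE
      have h3 := mul_left_cancel₀ hu0 h2
      linear_combination h3
    show (1 : ℝ) + ω * (Real.cos ω / Real.sin ω) * (1 / (l + b₀) + 1 / (l + b₁)) +
        l / ((l + b₀) * (l + b₁)) = 0
    have hsω : Real.sin ω ≠ 0 := hsin
    field_simp
    linear_combination (-1) * hEn +
      Real.sin ω * hω2
  · intro hD
    have hDe : (1 : ℝ) + ω * (Real.cos ω / Real.sin ω) * (1 / (l + b₀) + 1 / (l + b₁)) +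
        l / ((l + b₀) * (l + b₁)) = 0 := hD
    have hsω : Real.sin ω ≠ 0 := hsin
    set v : ℝ → ℝ := fun x => Real.cos (ω * x) + ((l + b₀)/ω) * Real.sin (ω * x) with hv
    have hd1 : ∀ x : ℝ, HasDerivAt v
        (-Real.sin (ω * x) * ω + ((l + b₀)/ω) * (Real.cos (ω * x) * ω)) x := fun x =>
      (hasDerivAt_cos_mul ω x).add ((hasDerivAt_sin_mul ω x).const_mul ((l + b₀)/ω))
    have hderiv1 : deriv v =
        fun x => -Real.sin (ω * x) * ω + ((l + b₀)/ω) * (Real.cos (ω * x) * ω) :=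
      funext fun x => (hd1 x).deriv
    have hωne : ω ≠ 0 := ne_of_gt hω0
    refine ⟨v, ?_, ?_, ?_, ?_, ?_⟩
    · have hc : ContDiff ℝ 2 (fun x : ℝ => Real.cos (ω * x)) :=
        (Real.contDiff_cos.of_le le_top).comp (contDiff_const.mul contDiff_id)
      have hs : ContDiff ℝ 2 (fun x : ℝ => ((l + b₀)/ω) * Real.sin (ω * x)) :=
        ContDiff.mul contDiff_const
          ((Real.contDiff_sin.of_le le_top).comp (contDiff_const.mul contDiff_id))
      exact hc.add hs
    · exact ⟨0, ⟨le_refl 0, zero_le_one⟩, by simp [hv]⟩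
    · intro x hx
      have hd2 : HasDerivAt (fun y => -Real.sin (ω * y) * ω + ((l + b₀)/ω) * (Real.cos (ω * y) * ω))
          (-(Real.cos (ω * x) * ω) * ω + ((l + b₀)/ω) * (-Real.sin (ω * x) * ω * ω)) x := by
        have h1 := ((hasDerivAt_sin_mul ω x).neg).mul_const ω
        have h2 := (((hasDerivAt_cos_mul ω x)).mul_const ω).const_mul ((l + b₀)/ω)
        exact h1.add h2
      rw [hderiv1, hd2.deriv]
      have : -(Real.cos (ω * x) * ω) * ω + ((l + b₀)/ω) * (-Real.sin (ω * x) * ω * ω) =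
          -(ω^2) * (Real.cos (ω * x) + ((l + b₀)/ω) * Real.sin (ω * x)) := by ring
      rw [this, hω2]
      simp only [hv]; ring
    · rw [hderiv1]
      simp only [hv, mul_zero, Real.sin_zero, Real.cos_zero]
      field_simp
      ring
    · rw [hderiv1]
      simp only [hv, mul_one]
      field_simp at hDe ⊢
      have hDe2 : (Real.sin ω * ((l + b₀) * (l + b₁)) + ω * Real.cos ω * (l + b₁ + (l + b₀)) +
          l * Real.sin ω) * ((l + b₀) * (l + b₁)) = 0 := by linear_combination ((l + b₀) * (l + b₁)) * hDe
      have hDe3 := (mul_eq_zero.mp hDe2).resolve_right (mul_ne_zero h0 h1)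
      linear_combination -hDe3 + Real.sin ω * hω2
end

section
/- Let b₀, b₁ > 0 and λ > 0. If u : [0,1] → ℝ is twice continuously differentiable and satisfies u''(x) = λ u(x) on [0,1], u'(0) = (λ + b₀) u(0), and −u'(1) = (λ + b₁) u(1), then u is identically zero. That is, the matrix operator of the heat equation with dynamical boundary conditions has no strictly positive eigenvalues. -/
/-- First-order linear ODE on an interval: `f' = c f` forces `f x = f 0 * exp(c x)`. -/
lemma ode_exp_aux (c : ℝ) (f : ℝ → ℝ) (hf : Continuous f)
    (h : ∀ x ∈ Set.Icc (0:ℝ) 1, HasDerivAt f (c * f x) x) :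
    ∀ x ∈ Set.Icc (0:ℝ) 1, f x = f 0 * Real.exp (c * x) := by
  set g : ℝ → ℝ := fun x => f x * Real.exp (-(c * x)) with hg
  have hgd : ∀ x ∈ Set.Icc (0:ℝ) 1, HasDerivAt g 0 x := by
    intro x hx
    have he : HasDerivAt (fun x : ℝ => Real.exp (-(c * x)))
        (Real.exp (-(c * x)) * (-c)) x := by
      have h1 : HasDerivAt (fun x : ℝ => -(c * x)) (-c) x := by
        have h := ((hasDerivAt_id' x).const_mul c).neg
        rw [mul_one] at h
        exact h
      exact h1.exp
    have := (h x hx).mul he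
    refine this.congr_deriv ?_
    ring
  have hgc : ContinuousOn g (Set.Icc 0 1) :=
    (hf.mul (Real.continuous_exp.comp (by continuity))).continuousOn
  have hconst := constant_of_has_deriv_right_zero hgc
    (fun x hx => ((hgd x (Set.Ico_subset_Icc_self hx)).hasDerivWithinAt))
  intro x hx
  have hgx : g x = g 0 := hconst x hx
  have h0 : f x * Real.exp (-(c * x)) = f 0 := by
    have := hgx
    simp only [hg] at this
    simpa using this
  rw [← h0, mul_assoc, ← Real.exp_add]
  simp

/-- The matrix operator of the heat equation with dynamical boundary conditions
has no strictly positive eigenvalues: for `b₀, b₁ > 0` and `λ > 0`, any `C²`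
solution of `u'' = λu` on `[0,1]` with `u'(0) = (λ+b₀)u(0)` and
`−u'(1) = (λ+b₁)u(1)` vanishes identically on `[0,1]`. -/
theorem no_positive_eigenvalues (b₀ b₁ l : ℝ) (hb₀ : 0 < b₀) (hb₁ : 0 < b₁)
    (hl : 0 < l) (u : ℝ → ℝ) (hu : ContDiff ℝ 2 u)
    (hode : ∀ x ∈ Set.Icc (0:ℝ) 1, deriv (deriv u) x = l * u x)
    (hbc0 : deriv u 0 = (l + b₀) * u 0)
    (hbc1 : -(deriv u 1) = (l + b₁) * u 1) :
    ∀ x ∈ Set.Icc (0:ℝ) 1, u x = 0 := by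
  set s := Real.sqrt l with hsdef
  have hs : 0 < s := Real.sqrt_pos.mpr hl
  have hs2 : s ^ 2 = l := Real.sq_sqrt hl.le
  have hu1 : Differentiable ℝ u := hu.differentiable (by norm_num)
  have hud : ContDiff ℝ 1 (deriv u) := by
    have h2 : ContDiff ℝ ((1 : ℕ∞) + 1) u := by
      exact_mod_cast hu
    exact_mod_cast (contDiff_succ_iff_deriv.mp h2).2.2
  have hu' : ∀ x, HasDerivAt u (deriv u x) x := fun x => (hu1 x).hasDerivAt
  have hu'' : ∀ x, HasDerivAt (deriv u) (deriv (deriv u) x) x :=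
    fun x => ((hud.differentiable (by norm_num)) x).hasDerivAt
  have hcont' : Continuous (deriv u) := hud.continuous
  -- v = u' + s u satisfies v' = s v ; w = u' - s u satisfies w' = -s w
  set v : ℝ → ℝ := fun x => deriv u x + s * u x with hvdef
  set w : ℝ → ℝ := fun x => deriv u x - s * u x with hwdef
  have hvd : ∀ x ∈ Set.Icc (0:ℝ) 1, HasDerivAt v (s * v x) x := by
    intro x hx
    have := (hu'' x).add ((hu' x).const_mul s)
    refine this.congr_deriv (Eq.symm ?_)
    rw [hode x hx]
    simp only [hvdef]
    linear_combination (u x) * hs2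
  have hwd : ∀ x ∈ Set.Icc (0:ℝ) 1, HasDerivAt w ((-s) * w x) x := by
    intro x hx
    have := (hu'' x).sub ((hu' x).const_mul s)
    refine this.congr_deriv (Eq.symm ?_)
    rw [hode x hx]
    simp only [hwdef]
    linear_combination (u x) * hs2
  have hvc : Continuous v := hcont'.add (continuous_const.mul hu1.continuous)
  have hwc : Continuous w := hcont'.sub (continuous_const.mul hu1.continuous)
  have hvall := ode_exp_aux s v hvc hvd
  have hwall := ode_exp_aux (-s) w hwc hwd
  have h1mem : (1:ℝ) ∈ Set.Icc (0:ℝ) 1 := by norm_num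
  have hv1 : deriv u 1 + s * u 1 = (deriv u 0 + s * u 0) * Real.exp s := by
    have := hvall 1 h1mem
    simpa [hvdef] using this
  have hw1 : deriv u 1 - s * u 1 = (deriv u 0 - s * u 0) * Real.exp (-s) := by
    have := hwall 1 h1mem
    simpa [hwdef] using this
  set E := Real.exp s with hEdef
  set F := Real.exp (-s) with hFdef
  have hE : 0 < E := Real.exp_pos _
  have hF : 0 < F := Real.exp_pos _
  have hFE : F < E := Real.exp_lt_exp.mpr (by linarith)
  -- key algebraic identity
  have key : u 0 * ((l+b₀+s)*(l+b₁+s)*E - (l+b₀-s)*(l+b₁-s)*F) = 0 := by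
    linear_combination (-(s+(l+b₁))) * hv1 + (-(s-(l+b₁))) * hw1
      + (-2*s) * hbc1 + (-((s+(l+b₁))*E + (s-(l+b₁))*F)) * hbc0
  have hpos : 0 < (l+b₀+s)*(l+b₁+s)*E - (l+b₀-s)*(l+b₁-s)*F := by
    nlinarith [mul_nonneg (by linarith : (0:ℝ) ≤ (l+b₀+s)-(l+b₀-s))
        (by linarith : (0:ℝ) ≤ (l+b₁+s)+(l+b₁-s)),
      mul_nonneg (by linarith : (0:ℝ) ≤ (l+b₀+s)+(l+b₀-s))
        (by linarith : (0:ℝ) ≤ (l+b₁+s)-(l+b₁-s)),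
      mul_pos (mul_pos (by linarith : (0:ℝ) < l+b₀+s) (by linarith : (0:ℝ) < l+b₁+s))
        (sub_pos.mpr hFE),
      mul_pos hF (mul_pos (by linarith : (0:ℝ) < l+b₀+s) (by linarith : (0:ℝ) < l+b₁+s))]
  have hP : u 0 = 0 := by
    rcases mul_eq_zero.mp key with h | h
    · exact h
    · linarith
  have hP' : deriv u 0 = 0 := by rw [hbc0, hP]; ring
  intro x hx
  have hvx := hvall x hx
  have hwx := hwall x hx
  simp only [hvdef, hwdef, hP, hP'] at hvx hwx
  have hvx0 : deriv u x + s * u x = 0 := by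
    rw [hvx]; ring
  have hwx0 : deriv u x - s * u x = 0 := by
    rw [hwx]; ring
  have : s * u x = 0 := by linarith
  exact (mul_eq_zero.mp this).resolve_left hs.ne'
end

section
/- Let g : ℝ → ℝ be continuously differentiable with |g'(a)| ≤ L for all a ∈ ℝ. Then for all u, v ∈ L²(0,1), lim_{r → 0, r ≠ 0} ∫₀¹ | (g(u(x) + r·v(x)) − g(u(x)))/r − g'(u(x))·v(x) |² dx = 0. In other words, the Nemytskii operator u ↦ g∘u from L²(0,1) to L²(0,1) has directional (Gâteaux) derivative at u in direction v given by the function x ↦ g'(u(x))·v(x). -/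
open MeasureTheory Filter

/-- Gâteaux differentiability of the Nemytskii operator: if `g ∈ C¹(ℝ)` has
derivative bounded by `L`, then for `u, v ∈ L²(0,1)`,
`∫₀¹ |(g(u+rv) − g(u))/r − g'(u)v|² dx → 0` as `r → 0`, `r ≠ 0`. -/
theorem nemytskii_gateaux (L : ℝ) (hL : 0 < L) (g : ℝ → ℝ)
    (hg : ContDiff ℝ 1 g) (hg' : ∀ a : ℝ, |deriv g a| ≤ L)
    (u v : Lp ℝ 2 (volume.restrict (Set.Ioo (0:ℝ) 1))) :
    Filter.Tendsto
      (fun r : ℝ => ∫ x in Set.Ioo (0:ℝ) 1,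
        ((g (u x + r * v x) - g (u x)) / r - deriv g (u x) * v x) ^ 2)
      (nhdsWithin 0 {0}ᶜ) (nhds 0) := by
  have hgd : Differentiable ℝ g := hg.differentiable one_ne_zero
  have hgc : Continuous g := hgd.continuous
  have hg'c : Continuous (deriv g) := hg.continuous_deriv le_rfl
  have hlip : LipschitzWith L.toNNReal g := by
    refine lipschitzWith_of_nnnorm_deriv_le hgd fun x => ?_
    rw [← NNReal.coe_le_coe, coe_nnnorm, Real.coe_toNNReal _ hL.le, Real.norm_eq_abs]
    exact hg' x
  have hμ : (volume.restrict (Set.Ioo (0:ℝ) 1)) = volume.restrict (Set.Ioo (0:ℝ) 1) := rfl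
  have hu := Lp.aestronglyMeasurable u
  have hv := Lp.aestronglyMeasurable v
  have hbound_int : Integrable (fun x => (2 * L * |v x|) ^ 2) (volume.restrict (Set.Ioo (0:ℝ) 1)) := by
    have h2 : Integrable (fun x => (v x) ^ 2) (volume.restrict (Set.Ioo (0:ℝ) 1)) := (Lp.memLp v).integrable_sq
    have h3 := h2.const_mul ((2 * L) ^ 2)
    refine h3.congr (ae_of_all _ fun x => ?_)
    simp only [mul_pow, sq_abs]
  have key := tendsto_integral_filter_of_dominated_convergence
    (μ := volume.restrict (Set.Ioo (0:ℝ) 1)) (l := nhdsWithin (0:ℝ) {0}ᶜ)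
    (F := fun r x => ((g (u x + r * v x) - g (u x)) / r - deriv g (u x) * v x) ^ 2)
    (f := fun _ => (0:ℝ)) (fun x => (2 * L * |v x|) ^ 2)
    ?_ ?_ hbound_int ?_
  · simpa using key
  · refine Eventually.of_forall fun r => ?_
    have h1 : AEStronglyMeasurable (fun x => g (u x + r * v x)) (volume.restrict (Set.Ioo (0:ℝ) 1)) :=
      hgc.comp_aestronglyMeasurable (hu.add (hv.const_mul r))
    have h2 : AEStronglyMeasurable (fun x => g (u x)) (volume.restrict (Set.Ioo (0:ℝ) 1)) :=
      hgc.comp_aestronglyMeasurable hu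
    have h3 : AEStronglyMeasurable (fun x => deriv g (u x) * v x) (volume.restrict (Set.Ioo (0:ℝ) 1)) :=
      (hg'c.comp_aestronglyMeasurable hu).mul hv
    exact ((((continuous_id.div_const r).comp_aestronglyMeasurable (h1.sub h2)).sub h3).pow 2)
  · filter_upwards [self_mem_nhdsWithin] with r hr
    have hr0 : r ≠ 0 := hr
    refine ae_of_all _ fun x => ?_
    rw [Real.norm_eq_abs, abs_of_nonneg (sq_nonneg _)]
    have hA : |(g (u x + r * v x) - g (u x)) / r| ≤ L * |v x| := by
      rw [abs_div, div_le_iff₀ (abs_pos.mpr hr0)]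
      calc |g (u x + r * v x) - g (u x)| ≤ L * (|r| * |v x|) := by
            have := hlip.dist_le_mul (u x + r * v x) (u x)
            simpa [Real.dist_eq, Real.coe_toNNReal _ hL.le, add_sub_cancel_left,
              abs_mul] using this
        _ = L * |v x| * |r| := by ring
    have hB : |deriv g (u x) * v x| ≤ L * |v x| := by
      rw [abs_mul]; exact mul_le_mul_of_nonneg_right (hg' _) (abs_nonneg _)
    have habs : |(g (u x + r * v x) - g (u x)) / r - deriv g (u x) * v x|
        ≤ 2 * L * |v x| := by
      calc |(g (u x + r * v x) - g (u x)) / r - deriv g (u x) * v x|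
          ≤ |(g (u x + r * v x) - g (u x)) / r| + |deriv g (u x) * v x| := abs_sub _ _
        _ ≤ L * |v x| + L * |v x| := add_le_add hA hB
        _ = 2 * L * |v x| := by ring
    calc ((g (u x + r * v x) - g (u x)) / r - deriv g (u x) * v x) ^ 2
        = |(g (u x + r * v x) - g (u x)) / r - deriv g (u x) * v x| ^ 2 := (sq_abs _).symm
      _ ≤ (2 * L * |v x|) ^ 2 := pow_le_pow_left₀ (abs_nonneg _) habs 2
  · refine ae_of_all _ fun x => ?_
    have hinner : HasDerivAt (fun r : ℝ => u x + r * v x) (v x) 0 := by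
      simpa using ((hasDerivAt_id (0:ℝ)).mul_const (v x)).const_add (u x)
    have houter := (hgd (u x + 0 * v x)).hasDerivAt
    have h1 : HasDerivAt (fun r : ℝ => g (u x + r * v x)) (deriv g (u x) * v x) 0 := by
      have h := houter.comp 0 hinner; simp only [zero_mul, add_zero] at h; exact h
    have h2 := hasDerivAt_iff_tendsto_slope.mp h1
    have h3 : Tendsto (fun r : ℝ => (g (u x + r * v x) - g (u x)) / r)
        (nhdsWithin 0 {0}ᶜ) (nhds (deriv g (u x) * v x)) := by
      refine h2.congr' ?_
      filter_upwards [self_mem_nhdsWithin] with r hr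
      simp [slope_def_field, div_eq_inv_mul]
    have h4 := (h3.sub_const (deriv g (u x) * v x)).pow 2
    simpa using h4
end
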